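/- Let n ≥ 8 and let T be a (2n)×2 matrix with positive real entries x_i, y_i (i = 1,…,2n). Set S_i = (x_{2i-1} y_{2i-1} x_{2i} y_{2i})^{1/2} for i = 1,…,n, and define r(T) to be the (2n-2)×2 matrix whose rows in order are (x_1/S_1, S_1/y_1), then for i = 2,…,n-1 the two rows (x_{2i}/S_i, S_i/y_{2i}) followed by (x_{2i-1}/S_i, S_i/y_{2i-1}), and finally (x_{2n}/S_n, S_n/y_{2n}). Then the fourth iterate r^{(4)}(T) is the (2n-8)×2 matrix with rows (x_5, y_5), (x_6, y_6), …, (x_{2n-4}, y_{2n-4}). -/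

import Mathlib

/-- `Sq x y i = S_i = (x_{2i-1} y_{2i-1} x_{2i} y_{2i})^{1/2}`. -/
noncomputable def Sq (x y : ℕ → ℝ) (i : ℕ) : ℝ :=
  Real.sqrt (x (2 * i - 1) * y (2 * i - 1) * x (2 * i) * y (2 * i))

/-- First column of `r(T)`: row `j` of `r(T)` is `(x_1/S_1, S_1/y_1)` for `j = 1`,
`(x_{2i}/S_i, S_i/y_{2i})` for `j = 2i-2` even, `(x_{2i-1}/S_i, S_i/y_{2i-1})` for
`j = 2i-1` odd, and `(x_{2n}/S_n, S_n/y_{2n})` for `j = 2n-2`. -/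
noncomputable def rOpX (x y : ℕ → ℝ) : ℕ → ℝ :=
  fun j => x (if j % 2 = 0 then j + 2 else j) /
    Sq x y (if j % 2 = 0 then j / 2 + 1 else (j + 1) / 2)

/-- Second column of `r(T)`. -/
noncomputable def rOpY (x y : ℕ → ℝ) : ℕ → ℝ :=
  fun j => Sq x y (if j % 2 = 0 then j / 2 + 1 else (j + 1) / 2) /
    y (if j % 2 = 0 then j + 2 else j)

/-- The operator `r` acting on the pair of columns of a `(2k) × 2` matrix. -/
noncomputable def rOp (p : (ℕ → ℝ) × (ℕ → ℝ)) : (ℕ → ℝ) × (ℕ → ℝ) :=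
  (rOpX p.1 p.2, rOpY p.1 p.2)


lemma eq_of_sq_eq {a b : ℝ} (ha : 0 ≤ a) (hb : 0 ≤ b) (h : a^2 = b^2) : a = b := by
  nlinarith [sq_nonneg (a - b)]

lemma pos_of_sq {a b : ℝ} (hnn : 0 ≤ a) (h : a^2 = b) (hb : 0 < b) : 0 < a := by
  nlinarith

lemma Sq_nonneg (f g : ℕ → ℝ) (i : ℕ) : 0 ≤ Sq f g i := Real.sqrt_nonneg _

lemma rOpX_odd' (f g : ℕ → ℝ) {j i : ℕ} (hi : 1 ≤ i) (hj : j = 2 * i - 1) :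
    rOpX f g j = f j / Sq f g i := by
  subst hj
  have h1 : (2 * i - 1) % 2 = 1 := by omega
  have h2 : (2 * i - 1 + 1) / 2 = i := by omega
  simp [rOpX, h1, h2]

lemma rOpY_odd' (f g : ℕ → ℝ) {j i : ℕ} (hi : 1 ≤ i) (hj : j = 2 * i - 1) :
    rOpY f g j = Sq f g i / g j := by
  subst hj
  have h1 : (2 * i - 1) % 2 = 1 := by omega
  have h2 : (2 * i - 1 + 1) / 2 = i := by omega
  simp [rOpY, h1, h2]

lemma rOpX_even' (f g : ℕ → ℝ) {j i : ℕ} (hj : j = 2 * i) :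
    rOpX f g j = f (j + 2) / Sq f g (i + 1) := by
  subst hj
  have h1 : (2 * i) % 2 = 0 := by omega
  have h2 : 2 * i / 2 + 1 = i + 1 := by omega
  simp [rOpX, h1, h2]

lemma rOpY_even' (f g : ℕ → ℝ) {j i : ℕ} (hj : j = 2 * i) :
    rOpY f g j = Sq f g (i + 1) / g (j + 2) := by
  subst hj
  have h1 : (2 * i) % 2 = 0 := by omega
  have h2 : 2 * i / 2 + 1 = i + 1 := by omega
  simp [rOpY, h1, h2]

section Levels

variable (x y : ℕ → ℝ) {m : ℕ}

lemma s_sq (h : ∀ k, 1 ≤ k → k ≤ m → 0 < x k ∧ 0 < y k) {i : ℕ} (hi : 1 ≤ i)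
    (hm : 2 * i ≤ m) :
    (Sq x y i) ^ 2 = x (2 * i - 1) * y (2 * i - 1) * x (2 * i) * y (2 * i) := by
  obtain ⟨hx1, hy1⟩ := h (2 * i - 1) (by omega) (by omega)
  obtain ⟨hx2, hy2⟩ := h (2 * i) (by omega) (by omega)
  rw [Sq, Real.sq_sqrt (by positivity)]

lemma s_pos (h : ∀ k, 1 ≤ k → k ≤ m → 0 < x k ∧ 0 < y k) {i : ℕ} (hi : 1 ≤ i)
    (hm : 2 * i ≤ m) : 0 < Sq x y i := by
  obtain ⟨hx1, hy1⟩ := h (2 * i - 1) (by omega) (by omega)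
  obtain ⟨hx2, hy2⟩ := h (2 * i) (by omega) (by omega)
  exact pos_of_sq (Sq_nonneg x y i) (s_sq x y h hi hm) (by positivity)

lemma t_sq (h : ∀ k, 1 ≤ k → k ≤ m → 0 < x k ∧ 0 < y k) {i : ℕ} (hi : 1 ≤ i)
    (hm : 2 * i + 2 ≤ m) :
    (Sq (rOpX x y) (rOpY x y) i) ^ 2
      = x (2 * i - 1) * x (2 * i + 2) / (y (2 * i - 1) * y (2 * i + 2)) := by
  obtain ⟨hx1, hy1⟩ := h (2 * i - 1) (by omega) (by omega)
  obtain ⟨hx2, hy2⟩ := h (2 * i) (by omega) (by omega)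
  obtain ⟨hx3, hy3⟩ := h (2 * i + 1) (by omega) (by omega)
  obtain ⟨hx4, hy4⟩ := h (2 * i + 2) (by omega) (by omega)
  have hs1 := s_pos x y h hi (by omega)
  have hs2 := s_pos x y h (i := i + 1) (by omega) (by omega)
  have hs1q := s_sq x y h hi (by omega)
  have hs2q := s_sq x y h (i := i + 1) (by omega) (by omega)
  simp only [show 2 * (i + 1) - 1 = 2 * i + 1 from by omega,
    show 2 * (i + 1) = 2 * i + 2 from by omega] at hs2q
  rw [Sq, rOpX_odd' _ _ hi rfl, rOpY_odd' _ _ hi rfl,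
    rOpX_even' _ _ (rfl : 2 * i = 2 * i), rOpY_even' _ _ (rfl : 2 * i = 2 * i)]
  rw [Real.sq_sqrt (by positivity)]
  set s1 := Sq x y i
  set s2 := Sq x y (i + 1)
  rw [show x (2 * i - 1) / s1 * (s1 / y (2 * i - 1)) * (x (2 * i + 2) / s2) *
        (s2 / y (2 * i + 2))
      = x (2 * i - 1) * x (2 * i + 2) / (y (2 * i - 1) * y (2 * i + 2)) *
        ((s1 * s2) / (s1 * s2)) from by ring]
  rw [div_self (by positivity), mul_one]

lemma t_pos (h : ∀ k, 1 ≤ k → k ≤ m → 0 < x k ∧ 0 < y k) {i : ℕ} (hi : 1 ≤ i)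
    (hm : 2 * i + 2 ≤ m) : 0 < Sq (rOpX x y) (rOpY x y) i := by
  obtain ⟨hx1, hy1⟩ := h (2 * i - 1) (by omega) (by omega)
  obtain ⟨hx4, hy4⟩ := h (2 * i + 2) (by omega) (by omega)
  exact pos_of_sq (Sq_nonneg _ _ i) (t_sq x y h hi hm) (by positivity)



lemma u_sq (h : ∀ k, 1 ≤ k → k ≤ m → 0 < x k ∧ 0 < y k) {i : ℕ} (hi : 1 ≤ i)
    (hm : 2 * i + 4 ≤ m) :
    (Sq (rOpX (rOpX x y) (rOpY x y)) (rOpY (rOpX x y) (rOpY x y)) i) ^ 2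
      = 1 / (x (2 * i) * y (2 * i) * (x (2 * i + 3) * y (2 * i + 3))) := by
  obtain ⟨hx1, hy1⟩ := h (2 * i - 1) (by omega) (by omega)
  obtain ⟨hx2, hy2⟩ := h (2 * i) (by omega) (by omega)
  obtain ⟨hx5, hy5⟩ := h (2 * i + 3) (by omega) (by omega)
  obtain ⟨hx6, hy6⟩ := h (2 * i + 4) (by omega) (by omega)
  have hs1 := s_pos x y h hi (by omega)
  have hs3 := s_pos x y h (i := i + 2) (by omega) (by omega)
  have ht1 := t_pos x y h hi (by omega)
  have ht2 := t_pos x y h (i := i + 1) (by omega) (by omega)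
  have hs1q := s_sq x y h hi (by omega)
  have hs3q := s_sq x y h (i := i + 2) (by omega) (by omega)
  simp only [show 2 * (i + 2) - 1 = 2 * i + 3 from by omega,
    show 2 * (i + 2) = 2 * i + 4 from by omega, show 2 * i + 4 - 1 = 2 * i + 3 from by omega] at hs3q
  rw [Sq, rOpX_odd' _ _ hi rfl, rOpY_odd' _ _ hi rfl,
    rOpX_even' _ _ (rfl : 2 * i = 2 * i), rOpY_even' _ _ (rfl : 2 * i = 2 * i),
    rOpX_odd' x y hi rfl, rOpY_odd' x y hi rfl,
    rOpX_even' x y (show 2 * i + 2 = 2 * (i + 1) from by ring),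
    rOpY_even' x y (show 2 * i + 2 = 2 * (i + 1) from by ring)]
  simp only [show 2 * i + 2 + 2 = 2 * i + 4 from by omega,
    show i + 1 + 1 = i + 2 from by omega]
  rw [Real.sq_sqrt (by positivity)]
  set s1 := Sq x y i
  set s3 := Sq x y (i + 2)
  set t1 := Sq (rOpX x y) (rOpY x y) i
  set t2 := Sq (rOpX x y) (rOpY x y) (i + 1)
  trans (x (2 * i - 1) * y (2 * i - 1) * (x (2 * i + 4) * y (2 * i + 4)) / (s1 ^ 2 * s3 ^ 2))
  · field_simp
  · rw [hs1q, hs3q]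
    field_simp

lemma u_pos (h : ∀ k, 1 ≤ k → k ≤ m → 0 < x k ∧ 0 < y k) {i : ℕ} (hi : 1 ≤ i)
    (hm : 2 * i + 4 ≤ m) :
    0 < Sq (rOpX (rOpX x y) (rOpY x y)) (rOpY (rOpX x y) (rOpY x y)) i := by
  obtain ⟨hx2, hy2⟩ := h (2 * i) (by omega) (by omega)
  obtain ⟨hx5, hy5⟩ := h (2 * i + 3) (by omega) (by omega)
  exact pos_of_sq (Sq_nonneg _ _ i) (u_sq x y h hi hm) (by positivity)

lemma v_sq (h : ∀ k, 1 ≤ k → k ≤ m → 0 < x k ∧ 0 < y k) {i : ℕ} (hi : 1 ≤ i)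
    (hm : 2 * i + 6 ≤ m) :
    (Sq (rOpX (rOpX (rOpX x y) (rOpY x y)) (rOpY (rOpX x y) (rOpY x y)))
        (rOpY (rOpX (rOpX x y) (rOpY x y)) (rOpY (rOpX x y) (rOpY x y))) i) ^ 2
      = y (2 * i + 2) * y (2 * i + 3) / (x (2 * i + 2) * x (2 * i + 3)) := by
  obtain ⟨hx1, hy1⟩ := h (2 * i - 1) (by omega) (by omega)
  obtain ⟨hx4, hy4⟩ := h (2 * i + 2) (by omega) (by omega)
  obtain ⟨hx5, hy5⟩ := h (2 * i + 3) (by omega) (by omega)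
  obtain ⟨hx8, hy8⟩ := h (2 * i + 6) (by omega) (by omega)
  have hs1 := s_pos x y h hi (by omega)
  have hs4 := s_pos x y h (i := i + 3) (by omega) (by omega)
  have ht1 := t_pos x y h hi (by omega)
  have ht3 := t_pos x y h (i := i + 2) (by omega) (by omega)
  have hu1 := u_pos x y h hi (by omega)
  have hu2 := u_pos x y h (i := i + 1) (by omega) (by omega)
  have ht1q := t_sq x y h hi (by omega)
  have ht3q := t_sq x y h (i := i + 2) (by omega) (by omega)
  simp only [show 2 * (i + 2) - 1 = 2 * i + 3 from by omega,
    show 2 * (i + 2) + 2 = 2 * i + 6 from by omega] at ht3q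
  rw [Sq, rOpX_odd' _ _ hi rfl, rOpY_odd' _ _ hi rfl,
    rOpX_even' _ _ (rfl : 2 * i = 2 * i), rOpY_even' _ _ (rfl : 2 * i = 2 * i),
    rOpX_odd' _ _ hi rfl, rOpY_odd' _ _ hi rfl,
    rOpX_even' _ _ (show 2 * i + 2 = 2 * (i + 1) from by ring),
    rOpY_even' _ _ (show 2 * i + 2 = 2 * (i + 1) from by ring)]
  simp only [show 2 * i + 2 + 2 = 2 * i + 4 from by omega,
    show i + 1 + 1 = i + 2 from by omega]
  rw [rOpX_odd' x y hi rfl, rOpY_odd' x y hi rfl,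
    rOpX_even' x y (show 2 * i + 4 = 2 * (i + 2) from by ring),
    rOpY_even' x y (show 2 * i + 4 = 2 * (i + 2) from by ring)]
  simp only [show 2 * i + 4 + 2 = 2 * i + 6 from by omega,
    show i + 2 + 1 = i + 3 from by omega]
  rw [Real.sq_sqrt (by positivity)]
  set s1 := Sq x y i
  set s4 := Sq x y (i + 3)
  set t1 := Sq (rOpX x y) (rOpY x y) i
  set t3 := Sq (rOpX x y) (rOpY x y) (i + 2)
  set u1 := Sq (rOpX (rOpX x y) (rOpY x y)) (rOpY (rOpX x y) (rOpY x y)) i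
  set u2 := Sq (rOpX (rOpX x y) (rOpY x y)) (rOpY (rOpX x y) (rOpY x y)) (i + 1)
  trans (x (2 * i - 1) * x (2 * i + 6) / ((y (2 * i - 1) * y (2 * i + 6)) * (t1 ^ 2 * t3 ^ 2)))
  · field_simp
  · rw [ht1q, ht3q]
    field_simp

lemma v_pos (h : ∀ k, 1 ≤ k → k ≤ m → 0 < x k ∧ 0 < y k) {i : ℕ} (hi : 1 ≤ i)
    (hm : 2 * i + 6 ≤ m) :
    0 < Sq (rOpX (rOpX (rOpX x y) (rOpY x y)) (rOpY (rOpX x y) (rOpY x y)))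
        (rOpY (rOpX (rOpX x y) (rOpY x y)) (rOpY (rOpX x y) (rOpY x y))) i := by
  obtain ⟨hx4, hy4⟩ := h (2 * i + 2) (by omega) (by omega)
  obtain ⟨hx5, hy5⟩ := h (2 * i + 3) (by omega) (by omega)
  exact pos_of_sq (Sq_nonneg _ _ i) (v_sq x y h hi hm) (by positivity)



lemma final_odd (h : ∀ k, 1 ≤ k → k ≤ m → 0 < x k ∧ 0 < y k) {i j : ℕ} (hi : 1 ≤ i)
    (hj : j = 2 * i - 1) (hm : 2 * i + 6 ≤ m) :
    rOpX (rOpX (rOpX (rOpX x y) (rOpY x y)) (rOpY (rOpX x y) (rOpY x y)))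
        (rOpY (rOpX (rOpX x y) (rOpY x y)) (rOpY (rOpX x y) (rOpY x y))) j = x (j + 4) ∧
    rOpY (rOpX (rOpX (rOpX x y) (rOpY x y)) (rOpY (rOpX x y) (rOpY x y)))
        (rOpY (rOpX (rOpX x y) (rOpY x y)) (rOpY (rOpX x y) (rOpY x y))) j = y (j + 4) := by
  subst hj
  have hj4 : 2 * i - 1 + 4 = 2 * i + 3 := by omega
  rw [hj4]
  obtain ⟨hx1, hy1⟩ := h (2 * i - 1) (by omega) (by omega)
  obtain ⟨hx2, hy2⟩ := h (2 * i) (by omega) (by omega)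
  obtain ⟨hx4, hy4⟩ := h (2 * i + 2) (by omega) (by omega)
  obtain ⟨hx5, hy5⟩ := h (2 * i + 3) (by omega) (by omega)
  have hs1 := s_pos x y h hi (by omega)
  have ht1 := t_pos x y h hi (by omega)
  have hu1 := u_pos x y h hi (by omega)
  have hv1 := v_pos x y h hi (by omega)
  have hs1q := s_sq x y h hi (by omega)
  have ht1q := t_sq x y h hi (by omega)
  have hu1q := u_sq x y h hi (by omega)
  have hv1q := v_sq x y h hi (by omega)
  rw [rOpX_odd' _ _ hi rfl, rOpY_odd' _ _ hi rfl,
    rOpX_odd' _ _ hi rfl, rOpY_odd' _ _ hi rfl,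
    rOpX_odd' _ _ hi rfl, rOpY_odd' _ _ hi rfl,
    rOpX_odd' x y hi rfl, rOpY_odd' x y hi rfl]
  set s1 := Sq x y i
  set t1 := Sq (rOpX x y) (rOpY x y) i
  set u1 := Sq (rOpX (rOpX x y) (rOpY x y)) (rOpY (rOpX x y) (rOpY x y)) i
  set v1 := Sq (rOpX (rOpX (rOpX x y) (rOpY x y)) (rOpY (rOpX x y) (rOpY x y)))
      (rOpY (rOpX (rOpX x y) (rOpY x y)) (rOpY (rOpX x y) (rOpY x y))) i
  constructor
  · apply eq_of_sq_eq (by positivity) hx5.le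
    rw [div_pow, div_pow, div_pow, div_pow, hs1q, ht1q, hu1q, hv1q]
    field_simp
  · apply eq_of_sq_eq (by positivity) hy5.le
    rw [div_pow, div_pow, div_pow, div_pow, hs1q, ht1q, hu1q, hv1q]
    field_simp

lemma final_even (h : ∀ k, 1 ≤ k → k ≤ m → 0 < x k ∧ 0 < y k) {i j : ℕ} (hi : 1 ≤ i)
    (hj : j = 2 * i) (hm : 2 * i + 8 ≤ m) :
    rOpX (rOpX (rOpX (rOpX x y) (rOpY x y)) (rOpY (rOpX x y) (rOpY x y)))
        (rOpY (rOpX (rOpX x y) (rOpY x y)) (rOpY (rOpX x y) (rOpY x y))) j = x (j + 4) ∧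
    rOpY (rOpX (rOpX (rOpX x y) (rOpY x y)) (rOpY (rOpX x y) (rOpY x y)))
        (rOpY (rOpX (rOpX x y) (rOpY x y)) (rOpY (rOpX x y) (rOpY x y))) j = y (j + 4) := by
  subst hj
  obtain ⟨hx6, hy6⟩ := h (2 * i + 4) (by omega) (by omega)
  obtain ⟨hx7, hy7⟩ := h (2 * i + 5) (by omega) (by omega)
  obtain ⟨hx9, hy9⟩ := h (2 * i + 7) (by omega) (by omega)
  obtain ⟨hx10, hy10⟩ := h (2 * i + 8) (by omega) (by omega)
  have hs5 := s_pos x y h (i := i + 4) (by omega) (by omega)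
  have ht4 := t_pos x y h (i := i + 3) (by omega) (by omega)
  have hu3 := u_pos x y h (i := i + 2) (by omega) (by omega)
  have hv2 := v_pos x y h (i := i + 1) (by omega) (by omega)
  have hs5q := s_sq x y h (i := i + 4) (by omega) (by omega)
  have ht4q := t_sq x y h (i := i + 3) (by omega) (by omega)
  have hu3q := u_sq x y h (i := i + 2) (by omega) (by omega)
  have hv2q := v_sq x y h (i := i + 1) (by omega) (by omega)
  simp only [show 2 * (i + 4) - 1 = 2 * i + 7 from by omega,
    show 2 * (i + 4) = 2 * i + 8 from by omega,
    show 2 * (i + 3) - 1 = 2 * i + 5 from by omega,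
    show 2 * (i + 3) + 2 = 2 * i + 8 from by omega,
    show 2 * (i + 2) = 2 * i + 4 from by omega,
    show 2 * (i + 2) + 3 = 2 * i + 7 from by omega,
    show 2 * (i + 1) + 2 = 2 * i + 4 from by omega,
    show 2 * (i + 1) + 3 = 2 * i + 5 from by omega, show 2 * i + 8 - 1 = 2 * i + 7 from by omega,
    show 2 * i + 4 + 3 = 2 * i + 7 from by omega] at hs5q ht4q hu3q hv2q
  rw [rOpX_even' _ _ (rfl : 2 * i = 2 * i), rOpY_even' _ _ (rfl : 2 * i = 2 * i),
    rOpX_even' _ _ (show 2 * i + 2 = 2 * (i + 1) from by ring),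
    rOpY_even' _ _ (show 2 * i + 2 = 2 * (i + 1) from by ring)]
  simp only [show 2 * i + 2 + 2 = 2 * i + 4 from by omega,
    show i + 1 + 1 = i + 2 from by omega]
  rw [rOpX_even' _ _ (show 2 * i + 4 = 2 * (i + 2) from by ring),
    rOpY_even' _ _ (show 2 * i + 4 = 2 * (i + 2) from by ring)]
  simp only [show 2 * i + 4 + 2 = 2 * i + 6 from by omega,
    show i + 2 + 1 = i + 3 from by omega]
  rw [rOpX_even' x y (show 2 * i + 6 = 2 * (i + 3) from by ring),
    rOpY_even' x y (show 2 * i + 6 = 2 * (i + 3) from by ring)]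
  simp only [show 2 * i + 6 + 2 = 2 * i + 8 from by omega,
    show i + 3 + 1 = i + 4 from by omega]
  set s5 := Sq x y (i + 4)
  set t4 := Sq (rOpX x y) (rOpY x y) (i + 3)
  set u3 := Sq (rOpX (rOpX x y) (rOpY x y)) (rOpY (rOpX x y) (rOpY x y)) (i + 2)
  set v2 := Sq (rOpX (rOpX (rOpX x y) (rOpY x y)) (rOpY (rOpX x y) (rOpY x y)))
      (rOpY (rOpX (rOpX x y) (rOpY x y)) (rOpY (rOpX x y) (rOpY x y))) (i + 1)
  constructor
  · apply eq_of_sq_eq (by positivity) hx6.le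
    rw [div_pow, div_pow, div_pow, div_pow, hs5q, ht4q, hu3q, hv2q]
    field_simp
  · apply eq_of_sq_eq (by positivity) hy6.le
    rw [div_pow, div_pow, div_pow, div_pow, hs5q, ht4q, hu3q, hv2q]
    field_simp

end Levels

theorem rOp_fourth_iterate (n : ℕ) (hn : 8 ≤ n) (x y : ℕ → ℝ)
    (hx : ∀ i, 1 ≤ i → i ≤ 2 * n → 0 < x i)
    (hy : ∀ i, 1 ≤ i → i ≤ 2 * n → 0 < y i) :
    ∀ j, 1 ≤ j → j ≤ 2 * n - 8 →
      (rOp (rOp (rOp (rOp (x, y))))).1 j = x (j + 4) ∧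
      (rOp (rOp (rOp (rOp (x, y))))).2 j = y (j + 4) := by
  intro j hj1 hj2
  have h : ∀ k, 1 ≤ k → k ≤ 2 * n → 0 < x k ∧ 0 < y k :=
    fun k hk1 hk2 => ⟨hx k hk1 hk2, hy k hk1 hk2⟩
  rcases Nat.even_or_odd j with he | ho
  · obtain ⟨i, hji⟩ := he
    have hji' : j = 2 * i := by omega
    have hi : 1 ≤ i := by omega
    exact final_even x y h hi hji' (by omega)
  · obtain ⟨i, hji⟩ := ho
    have hji' : j = 2 * (i + 1) - 1 := by omega
    exact final_odd x y h (i := i + 1) (by omega) hji' (by omega)
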